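/- arXiv:2103.02741 — 5 statements merged into one kernel-verified Lean document; each statement's English description precedes it below -/
import Mathlib

section
/- Let P_1* ≥ P_2* ≥ ... ≥ P_k* be reals, δ_{ij} = P_i* − P_j*, Δ_l = ∑_{i=l}^k δ_{li}, and ε ≥ 0. Define σ_{ij} = 4·δ_{ij}·(Δ_j + ε)/(Δ_i + ε)^2 (assuming Δ_i + ε > 0). Then for every i ≤ k, ∑_{j=i}^{k} σ_{ij} ≤ 2. -/
lemma tele_aux (f : ℕ → ℝ) : ∀ a b, a ≤ b → ∑ j ∈ Finset.Ico a b, (f j - f (j+1)) = f a - f b := by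
  intro a b h
  induction b with
  | zero => interval_cases a; simp
  | succ n ih =>
    rcases Nat.lt_or_ge a (n+1) with h1 | h1
    · have ha : a ≤ n := Nat.lt_succ_iff.mp h1
      rw [Finset.sum_Ico_succ_top (by omega : a ≤ n), ih ha]; ring
    · have : a = n+1 := le_antisymm h h1
      subst this; simp

theorem stmt2 (k : ℕ) (P : ℕ → ℝ)
    (hmono : ∀ i j, 1 ≤ i → i ≤ j → j ≤ k → P j ≤ P i)
    (ε : ℝ) (hε : 0 ≤ ε)
    (Δ : ℕ → ℝ) (hΔ : ∀ l, Δ l = ∑ i ∈ Finset.Icc l k, (P l - P i))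
    (hpos : ∀ i, 1 ≤ i → i ≤ k → 0 < Δ i + ε) :
    ∀ i, 1 ≤ i → i ≤ k →
      ∑ j ∈ Finset.Icc i k, 4 * (P i - P j) * (Δ j + ε) / (Δ i + ε) ^ 2 ≤ 2 := by
  intro i hi1 hik
  have hDpos : 0 < Δ i + ε := hpos i hi1 hik
  set S : ℕ → ℝ := fun j => (∑ m ∈ Finset.Icc j k, (P i - P m)) + ε with hS
  have hSi : S i = Δ i + ε := by rw [hS, hΔ]
  have hsplit : ∀ j, j ≤ k → Finset.Icc j k = insert j (Finset.Icc (j+1) k) := by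
    intro j hj
    ext x
    simp only [Finset.mem_Icc, Finset.mem_insert]
    omega
  have hstep : ∀ j, j ≤ k → S j - S (j+1) = P i - P j := by
    intro j hj
    simp only [hS]
    rw [hsplit j hj, Finset.sum_insert (by simp)]
    ring
  -- per-term bound
  have hterm : ∀ j ∈ Finset.Icc i k,
      4 * (P i - P j) * (Δ j + ε) ≤ 2 * (S j ^ 2 - S (j+1) ^ 2) := by
    intro j hj
    rw [Finset.mem_Icc] at hj
    obtain ⟨hij, hjk⟩ := hj
    have hd : 0 ≤ P i - P j := by
      have := hmono i j hi1 hij hjk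
      linarith
    -- Δ j + ε ≤ S (j+1)
    have hΔle : Δ j + ε ≤ S (j+1) := by
      rw [hΔ, hS]
      have : (∑ m ∈ Finset.Icc j k, (P j - P m)) =
          ∑ m ∈ Finset.Icc (j+1) k, (P j - P m) := by
        rw [hsplit j hjk, Finset.sum_insert (by simp)]
        ring
      rw [this]
      dsimp only
      have hle : ∑ m ∈ Finset.Icc (j+1) k, (P j - P m) ≤
          ∑ m ∈ Finset.Icc (j+1) k, (P i - P m) := by
        apply Finset.sum_le_sum
        intro m hm
        have := hmono i j hi1 hij hjk
        linarith
      linarith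
    -- S (j+1) ≥ ε ≥ 0
    have hSnn : ε ≤ S (j+1) := by
      simp only [hS, le_add_iff_nonneg_left]
      apply Finset.sum_nonneg
      intro m hm
      rw [Finset.mem_Icc] at hm
      have := hmono i m hi1 (by omega) hm.2
      linarith
    have hd' : S j - S (j+1) = P i - P j := hstep j hjk
    nlinarith [sq_nonneg (S j - S (j+1))]
  have hsum : ∑ j ∈ Finset.Icc i k, 4 * (P i - P j) * (Δ j + ε) ≤
      2 * ((S i) ^ 2 - (S (k+1)) ^ 2) := by
    calc ∑ j ∈ Finset.Icc i k, 4 * (P i - P j) * (Δ j + ε)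
        ≤ ∑ j ∈ Finset.Icc i k, 2 * (S j ^ 2 - S (j+1) ^ 2) :=
          Finset.sum_le_sum hterm
      _ = 2 * ∑ j ∈ Finset.Ico i (k+1), ((fun j => S j ^ 2) j - (fun j => S j ^ 2) (j+1)) := by
          rw [Finset.mul_sum]
          congr 1
      _ = 2 * ((S i) ^ 2 - (S (k+1)) ^ 2) := by
          rw [tele_aux (fun j => S j ^ 2) i (k+1) (by omega)]
  have hSk1 : S (k+1) = ε := by simp [hS]
  have hfinal : ∑ j ∈ Finset.Icc i k, 4 * (P i - P j) * (Δ j + ε) ≤ 2 * (Δ i + ε) ^ 2 := by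
    rw [hSi] at hsum
    nlinarith [sq_nonneg (S (k+1))]
  rw [← Finset.sum_div, div_le_iff₀ (by positivity)]
  linarith
end

section
/- Let σ: {(i,j) : 1 ≤ i < j ≤ k} → ℝ≥0 satisfy ∑_{j=i+1}^{k} σ_{ij} ≤ 2 for all i. Define f(i,j) recursively (on j − i) by f(i,j) = 0.4·σ_{ij} + ∑_{m=i+1}^{j−1} 0.4·σ_{im}·f(m,j). Then f(i,j) ≤ 1 for all 1 ≤ i < j ≤ k. -/
theorem stmt3 (k : ℕ) (σ : ℕ → ℕ → ℝ)
    (hσ : ∀ i j, 1 ≤ i → i < j → j ≤ k → 0 ≤ σ i j)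
    (hrow : ∀ i, 1 ≤ i → i ≤ k → ∑ j ∈ Finset.Ioc i k, σ i j ≤ 2)
    (f : ℕ → ℕ → ℝ)
    (hf : ∀ i j, 1 ≤ i → i < j → j ≤ k →
      f i j = 0.4 * σ i j + ∑ m ∈ Finset.Ioo i j, 0.4 * σ i m * f m j) :
    ∀ i j, 1 ≤ i → i < j → j ≤ k → f i j ≤ 1 := by
  have key : ∀ n i j, 1 ≤ i → i < j → j ≤ k → j - i ≤ n → f i j ≤ 1 := by
    intro n
    induction n with
    | zero => intro i j hi hij hjk hle; omega
    | succ n ih =>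
      intro i j hi hij hjk hle
      rw [hf i j hi hij hjk]
      have hsum : ∑ m ∈ Finset.Ioo i j, 0.4 * σ i m * f m j ≤
          ∑ m ∈ Finset.Ioo i j, 0.4 * σ i m := by
        apply Finset.sum_le_sum
        intro m hm
        simp only [Finset.mem_Ioo] at hm
        have hσm : (0:ℝ) ≤ 0.4 * σ i m := by
          have := hσ i m hi hm.1 (by omega)
          positivity
        have hfm : f m j ≤ 1 := ih m j (by omega) hm.2 hjk (by omega)
        nlinarith
      have heq : 0.4 * σ i j + ∑ m ∈ Finset.Ioo i j, 0.4 * σ i m =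
          ∑ m ∈ Finset.Ioc i j, 0.4 * σ i m := by
        rw [← Finset.Ioo_insert_right hij, Finset.sum_insert (by simp)]
      have hsub : ∑ m ∈ Finset.Ioc i j, 0.4 * σ i m ≤
          ∑ m ∈ Finset.Ioc i k, 0.4 * σ i m := by
        apply Finset.sum_le_sum_of_subset_of_nonneg
        · exact Finset.Ioc_subset_Ioc_right hjk
        · intro m hm _
          simp only [Finset.mem_Ioc] at hm
          have := hσ i m hi hm.1 hm.2
          positivity
      have hrow' := hrow i hi (by omega)
      have : ∑ m ∈ Finset.Ioc i k, 0.4 * σ i m ≤ 0.8 := by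
        rw [← Finset.mul_sum]; nlinarith
      linarith
  intro i j hi hij hjk
  exact key (j - i) i j hi hij hjk le_rfl
end

section
/- In the Multinomial Logit model, where each arm a_i has utility v_i ∈ ℝ and P(a_i | s) = e^{v_i} / (e^{v_0} + ∑_{a_j ∈ s} e^{v_j}) for a set s containing a_i, the weak optimal set consistency assumption holds: if s* maximizes ∑_{a_i ∈ s} P(a_i | s) over all size-k subsets s (equivalently, s* consists of the k arms with largest v_i), then for any size-k set s and any arm a ∈ s ∩ s*, P(a | s) ≥ P(a | s*). -/
theorem stmt7 (n k : ℕ) (v : Fin n → ℝ) (v0 : ℝ)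
    (sstar : Finset (Fin n)) (hcard : sstar.card = k)
    (hopt : ∀ s : Finset (Fin n), s.card = k →
      ∑ a ∈ s, Real.exp (v a) / (Real.exp v0 + ∑ j ∈ s, Real.exp (v j)) ≤
        ∑ a ∈ sstar, Real.exp (v a) / (Real.exp v0 + ∑ j ∈ sstar, Real.exp (v j))) :
    ∀ s : Finset (Fin n), s.card = k → ∀ a, a ∈ s → a ∈ sstar →
      Real.exp (v a) / (Real.exp v0 + ∑ j ∈ sstar, Real.exp (v j)) ≤
        Real.exp (v a) / (Real.exp v0 + ∑ j ∈ s, Real.exp (v j)) := by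
  intro s hs a _ _
  have hc : (0:ℝ) < Real.exp v0 := Real.exp_pos _
  set Ss := ∑ j ∈ s, Real.exp (v j) with hSs
  set St := ∑ j ∈ sstar, Real.exp (v j) with hSt
  have hSs0 : 0 ≤ Ss := Finset.sum_nonneg fun _ _ => (Real.exp_pos _).le
  have hSt0 : 0 ≤ St := Finset.sum_nonneg fun _ _ => (Real.exp_pos _).le
  have h1 : Ss / (Real.exp v0 + Ss) ≤ St / (Real.exp v0 + St) := by
    have := hopt s hs
    rwa [← Finset.sum_div, ← Finset.sum_div] at this
  have hds : 0 < Real.exp v0 + Ss := by linarith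
  have hdt : 0 < Real.exp v0 + St := by linarith
  have h2 : Ss ≤ St := by
    rw [div_le_div_iff₀ hds hdt] at h1
    nlinarith
  exact div_le_div_of_nonneg_left (Real.exp_pos _).le hds (by linarith)
end

section
/- Let (c_l)_{l=1}^{k} be nonnegative reals satisfying c_l ≤ 3.08 + 0.275·∑_{i=1}^{l−1} σ_{il}·c_i, where σ_{ij} ≥ 0 and ∑_{j=i+1}^{k} σ_{ij} ≤ 2 for every i. Then c_l ≤ 10·l for all l. -/
theorem stmt14 (k : ℕ) (c : ℕ → ℝ) (σ : ℕ → ℕ → ℝ)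
    (hc0 : ∀ l, 1 ≤ l → l ≤ k → 0 ≤ c l)
    (hσ : ∀ i j, 1 ≤ i → i < j → j ≤ k → 0 ≤ σ i j)
    (hrow : ∀ i, 1 ≤ i → i ≤ k → ∑ j ∈ Finset.Ioc i k, σ i j ≤ 2)
    (hrec : ∀ l, 1 ≤ l → l ≤ k →
      c l ≤ 3.08 + 0.275 * ∑ i ∈ Finset.Ico 1 l, σ i l * c i) :
    ∀ l, 1 ≤ l → l ≤ k → c l ≤ 10 * l := by
  -- each σ i l is at most 2
  have hσ2 : ∀ i l, 1 ≤ i → i < l → l ≤ k → σ i l ≤ 2 := by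
    intro i l hi hil hlk
    calc σ i l ≤ ∑ j ∈ Finset.Ioc i k, σ i j := by
          apply Finset.single_le_sum (f := fun j => σ i j)
          · intro j hj
            exact hσ i j hi (Finset.mem_Ioc.mp hj).1 (Finset.mem_Ioc.mp hj).2
          · exact Finset.mem_Ioc.mpr ⟨hil, hlk⟩
      _ ≤ 2 := hrow i hi (le_trans hil.le hlk)
  -- row sums over any prefix are at most 2
  have hrow' : ∀ i n, 1 ≤ i → i ≤ k → n ≤ k → ∑ l ∈ Finset.Ioc i n, σ i l ≤ 2 := by
    intro i n hi hik hnk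
    calc ∑ l ∈ Finset.Ioc i n, σ i l ≤ ∑ l ∈ Finset.Ioc i k, σ i l := by
          apply Finset.sum_le_sum_of_subset_of_nonneg
          · exact Finset.Ioc_subset_Ioc_right hnk
          · intro j hj _
            exact hσ i j hi (Finset.mem_Ioc.mp hj).1 (Finset.mem_Ioc.mp hj).2
      _ ≤ 2 := hrow i hi hik
  -- partial sum bound
  have hS : ∀ n, n ≤ k → ∑ l ∈ Finset.Icc 1 n, c l ≤ (3.08 / 0.45) * n := by
    intro n hn
    set S := ∑ l ∈ Finset.Icc 1 n, c l with hSdef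
    have h1 : S ≤ ∑ l ∈ Finset.Icc 1 n, (3.08 + 0.275 * ∑ i ∈ Finset.Ico 1 l, σ i l * c i) := by
      apply Finset.sum_le_sum
      intro l hl
      obtain ⟨h1l, hln⟩ := Finset.mem_Icc.mp hl
      exact hrec l h1l (hln.trans hn)
    have h2 : ∑ l ∈ Finset.Icc 1 n, (3.08 + 0.275 * ∑ i ∈ Finset.Ico 1 l, σ i l * c i)
        = 3.08 * n + 0.275 * ∑ l ∈ Finset.Icc 1 n, ∑ i ∈ Finset.Ico 1 l, σ i l * c i := by
      rw [Finset.sum_add_distrib, Finset.sum_const, Nat.card_Icc, ← Finset.mul_sum]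
      simp
      ring
    have hswap : ∑ l ∈ Finset.Icc 1 n, ∑ i ∈ Finset.Ico 1 l, σ i l * c i
        = ∑ i ∈ Finset.Ico 1 n, ∑ l ∈ Finset.Ioc i n, σ i l * c i := by
      apply Finset.sum_comm'
      intro l i
      simp only [Finset.mem_Icc, Finset.mem_Ico, Finset.mem_Ioc]
      omega
    have h3 : ∑ i ∈ Finset.Ico 1 n, ∑ l ∈ Finset.Ioc i n, σ i l * c i
        ≤ ∑ i ∈ Finset.Ico 1 n, 2 * c i := by
      apply Finset.sum_le_sum
      intro i hi
      obtain ⟨h1i, hin⟩ := Finset.mem_Ico.mp hi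
      have hci : 0 ≤ c i := hc0 i h1i ((le_of_lt hin).trans hn)
      rw [← Finset.sum_mul]
      exact mul_le_mul_of_nonneg_right (hrow' i n h1i ((le_of_lt hin).trans hn) hn) hci
    have h4 : ∑ i ∈ Finset.Ico 1 n, 2 * c i ≤ 2 * S := by
      rw [← Finset.mul_sum]
      apply mul_le_mul_of_nonneg_left _ (by norm_num)
      apply Finset.sum_le_sum_of_subset_of_nonneg
      · exact Finset.Ico_subset_Icc_self
      · intro j hj _
        obtain ⟨h1j, hjn⟩ := Finset.mem_Icc.mp hj
        exact hc0 j h1j (hjn.trans hn)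
    have hfinal : S ≤ 3.08 * n + 0.275 * (2 * S) := by
      calc S ≤ 3.08 * n + 0.275 * ∑ l ∈ Finset.Icc 1 n, ∑ i ∈ Finset.Ico 1 l, σ i l * c i :=
            h1.trans h2.le
        _ ≤ 3.08 * n + 0.275 * (2 * S) := by
            rw [hswap]
            have := h3.trans h4
            nlinarith
    nlinarith
  intro l hl hlk
  have hbound : ∑ i ∈ Finset.Ico 1 l, σ i l * c i ≤ 2 * ((3.08 / 0.45) * (l - 1 : ℕ)) := by
    have hIco : Finset.Ico 1 l = Finset.Icc 1 (l - 1) := by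
      ext x; simp [Finset.mem_Ico, Finset.mem_Icc]; omega
    calc ∑ i ∈ Finset.Ico 1 l, σ i l * c i ≤ ∑ i ∈ Finset.Ico 1 l, 2 * c i := by
          apply Finset.sum_le_sum
          intro i hi
          obtain ⟨h1i, hil⟩ := Finset.mem_Ico.mp hi
          exact mul_le_mul_of_nonneg_right (hσ2 i l h1i hil hlk)
            (hc0 i h1i ((le_of_lt hil).trans hlk))
      _ = 2 * ∑ i ∈ Finset.Icc 1 (l - 1), c i := by rw [hIco, Finset.mul_sum]
      _ ≤ 2 * ((3.08 / 0.45) * (l - 1 : ℕ)) := by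
          apply mul_le_mul_of_nonneg_left _ (by norm_num)
          exact hS (l - 1) (by omega)
  have hc := hrec l hl hlk
  have hcast : ((l - 1 : ℕ) : ℝ) = (l : ℝ) - 1 := by
    have : (1 : ℕ) ≤ l := hl
    push_cast [this]
    ring
  have hl1 : (1 : ℝ) ≤ (l : ℝ) := by exact_mod_cast hl
  rw [hcast] at hbound
  nlinarith
end

section
/- Suppose the sequence ρ(t) = min_{τ ≤ t} min_{i ∈ s(τ)} UCB_i(τ) generated by the top-k UCB selection rule satisfies: UCB values of unselected arms are unchanged between rounds, and s(t) consists of the k arms with largest UCB_i(t). Then for every t and every arm i ∉ s(t), UCB_i(t) ≤ ρ(t). -/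
theorem stmt19 (n k : ℕ) (hk : 1 ≤ k)
    (UCB : ℕ → Fin n → ℝ) (s : ℕ → Finset (Fin n))
    (hcard : ∀ t, (s t).card = k)
    (htop : ∀ t, ∀ i ∈ s t, ∀ j, j ∉ s t → UCB t j ≤ UCB t i)
    (hfreeze : ∀ t, ∀ j, j ∉ s t → UCB (t + 1) j = UCB t j)
    (ρ : ℕ → ℝ)
    (hρ : ∀ t, IsLeast {x : ℝ | ∃ τ ≤ t, ∃ i ∈ s τ, x = UCB τ i} (ρ t)) :
    ∀ t, ∀ i, i ∉ s t → UCB t i ≤ ρ t := by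
  have key : ∀ t, ∀ i, i ∉ s t → ∀ τ ≤ t, ∀ j ∈ s τ, UCB t i ≤ UCB τ j := by
    intro t
    induction t with
    | zero =>
      intro i hi τ hτ j hj
      interval_cases τ
      exact htop 0 j hj i hi
    | succ t ih =>
      intro i hi τ hτ j hj
      rcases Nat.lt_or_ge τ (t + 1) with h | h
      · have hτt : τ ≤ t := Nat.lt_succ_iff.mp h
        by_cases his : i ∈ s t
        · -- i was evicted; find c ∈ s (t+1) \ s t
          have hne : ¬ s (t + 1) ⊆ s t := by
            intro hsub
            have : s (t + 1) = s t :=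
              Finset.eq_of_subset_of_card_le hsub (by rw [hcard, hcard])
            exact hi (this ▸ his)
          obtain ⟨c, hc1, hc2⟩ := Finset.not_subset.mp hne
          calc UCB (t + 1) i ≤ UCB (t + 1) c := htop (t + 1) c hc1 i hi
            _ = UCB t c := hfreeze t c hc2
            _ ≤ UCB τ j := ih c hc2 τ hτt j hj
        · rw [hfreeze t i his]
          exact ih i his τ hτt j hj
      · have : τ = t + 1 := le_antisymm hτ h
        subst this
        exact htop _ j hj i hi
  intro t i hi
  obtain ⟨⟨τ, hτ, j, hj, hx⟩, _⟩ := hρ t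
  rw [hx]
  exact key t i hi τ hτ j hj
end
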